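/- Fix an alphabet A, let 𝔻 := Σ n, DFA A (Fin n) be the type of DFAs over A, and let T be a type. Let F and M_T be the functors from the product category (Type u) × (Type u) to Type u given on objects by F(R, X) = (List A × (Bool → X)) ⊕ (𝔻 × R × (List A → X)) and M_T(R, X) = T → (R ⊕ X × T) (with the evident action on morphisms). Then there is a bijection between natural transformations α : F ⟶ M_T and pairs of functions (MQᵀ : T × List A → Bool × T, EQᵀ : T × 𝔻 → Option (List A × T)). -/

import Mathlib

open CategoryTheory

/-- The type of DFAs over the alphabet `A`, with state type `Fin n` for some `n`. -/
abbrev DFAs (A : Type) : Type := Σ n : ℕ, DFA A (Fin n)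

/-- The game type of DFA learning:
`F (R, X) = (List A × (Bool → X)) ⊕ (𝔻 × R × (List A → X))`,
where the left summand encodes membership queries and the right summand
encodes equivalence queries. -/
def FDFA (A : Type) : Type × Type ⥤ Type where
  obj P := (List A × (Bool → P.2)) ⊕ (DFAs A × P.1 × (List A → P.2))
  map f :=
    TypeCat.ofHom (Sum.map
      (fun x => (x.1, fun b => f.2 (x.2 b)))
      (fun x => (x.1, f.1 x.2.1, fun w => f.2 (x.2.2 w))))
  map_id := by
    intro P
    ext x
    cases x <;> rfl
  map_comp := by
    intro P Q S f g
    ext x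
    cases x <;> rfl

/-- The teacher functor `M_T (R, X) = T → (R ⊕ X × T)`. -/
def MGame (T : Type) : Type × Type ⥤ Type where
  obj P := T → (P.1 ⊕ P.2 × T)
  map f := TypeCat.ofHom (fun g t => Sum.map f.1 (Prod.map f.2 id) (g t))
  map_id := by
    intro P
    ext g t
    dsimp
    cases g t <;> rfl
  map_comp := by
    intro P Q S f g
    ext h t
    dsimp
    cases h t <;> rfl

/-- Build a natural transformation from a pair of query maps. -/
def buildTeacher (A T : Type) (p : (T × List A → Bool × T) × (T × DFAs A → Option (List A × T))) :
    FDFA A ⟶ MGame T where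
  app P := TypeCat.ofHom fun (x : (List A × (Bool → P.2)) ⊕ (DFAs A × P.1 × (List A → P.2)))
      (t : T) => (show P.1 ⊕ P.2 × T from
    match x with
    | Sum.inl (w, k) => Sum.inr (k (p.1 (t, w)).1, (p.1 (t, w)).2)
    | Sum.inr (d, r, c) =>
      match p.2 (t, d) with
      | none => Sum.inl r
      | some (w, t') => Sum.inr (c w, t'))
  naturality := by
    intro P Q f
    ext x
    cases x with
    | inl y => rfl
    | inr y =>
      funext t
      dsimp [FDFA, MGame]
      cases p.2 (t, y.1) <;> rfl

/-- Extract the query maps from a natural transformation. -/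
def extractTeacher (A T : Type) (α : FDFA A ⟶ MGame T) :
    (T × List A → Bool × T) × (T × DFAs A → Option (List A × T)) :=
  (fun q =>
    match α.app (PEmpty, Bool) (Sum.inl (q.2, (id : Bool → Bool)) : (FDFA A).obj (PEmpty, Bool)) q.1 with
    | Sum.inl e => e.elim
    | Sum.inr (b, t') => (b, t'),
   fun q =>
    match α.app (PUnit, List A) (Sum.inr (q.2, PUnit.unit, (id : List A → List A)) : (FDFA A).obj (PUnit, List A)) q.1 with
    | Sum.inl _ => none
    | Sum.inr (w, t') => some (w, t'))

/-- Teachers in the generic sense (natural transformations `F ⟶ M_T`) for the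
DFA learning game type correspond bijectively to pairs of a membership query
map `MQᵀ : T × List A → Bool × T` and an equivalence query map
`EQᵀ : T × 𝔻 → Option (List A × T)`. -/
theorem dfa_teacher_characterization (A T : Type) :
    Nonempty
      ((FDFA A ⟶ MGame T) ≃
        ((T × List A → Bool × T) × (T × DFAs A → Option (List A × T)))) := by
  refine ⟨{ toFun := extractTeacher A T, invFun := buildTeacher A T,
            left_inv := ?_, right_inv := ?_ }⟩
  · intro α
    ext P x
    funext t
    cases x with
    | inl y =>
      obtain ⟨w, k⟩ := y
      have h := congrFun (CategoryTheory.congr_fun (α.naturality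
        (show ((PEmpty, Bool) : Type × Type) ⟶ P from (TypeCat.ofHom PEmpty.elim, TypeCat.ofHom k)))
        (Sum.inl (w, (id : Bool → Bool)) : (FDFA A).obj (PEmpty, Bool))) t
      dsimp [FDFA, MGame] at h
      dsimp [buildTeacher, extractTeacher]
      simp only [ConcreteCategory.hom_ofHom]
      refine Eq.trans ?_ (show α.app P (Sum.inl (w, k)) t = Sum.map PEmpty.elim (Prod.map k id) (α.app (PEmpty, Bool) (Sum.inl (w, (id : Bool → Bool)) : (FDFA A).obj (PEmpty, Bool)) t) from h).symm
      cases α.app (PEmpty, Bool) (Sum.inl (w, (id : Bool → Bool)) : (FDFA A).obj (PEmpty, Bool)) t with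
      | inl e => exact e.elim
      | inr z => rfl
    | inr y =>
      obtain ⟨d, r, c⟩ := y
      have h := congrFun (CategoryTheory.congr_fun (α.naturality
        (show ((PUnit, List A) : Type × Type) ⟶ P from (TypeCat.ofHom fun _ => r, TypeCat.ofHom c)))
        (Sum.inr (d, PUnit.unit, (id : List A → List A)) : (FDFA A).obj (PUnit, List A))) t
      dsimp [FDFA, MGame] at h
      dsimp [buildTeacher, extractTeacher]
      simp only [ConcreteCategory.hom_ofHom]
      refine Eq.trans ?_ (show α.app P (Sum.inr (d, r, c)) t = Sum.map (fun _ => r) (Prod.map c id) (α.app (PUnit, List A) (Sum.inr (d, PUnit.unit, (id : List A → List A))  : (FDFA A).obj (PUnit, List A)) t) from h).symm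
      cases α.app (PUnit, List A) (Sum.inr (d, PUnit.unit, (id : List A → List A)) : (FDFA A).obj (PUnit, List A)) t with
      | inl e => rfl
      | inr z => rfl
  · intro p
    refine Prod.ext (funext fun q => rfl) (funext fun q => ?_)
    dsimp [buildTeacher, extractTeacher]
    rcases q with ⟨t, d⟩
    show (match (match p.2 (t, d) with | none => (Sum.inl PUnit.unit : PUnit ⊕ List A × T) | some (w, t') => Sum.inr (w, t')) with | Sum.inl _ => none | Sum.inr (w, t') => some (w, t')) = p.2 (t, d)
    cases p.2 (t, d) <;> rfl
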